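/- arXiv:1811.12137 — 4 statements merged into one kernel-verified Lean document; each statement's English description precedes it below -/
import Mathlib

section
/- Let R_rat(u) := Id − (ħ/u)·P. Then the fused product R_{23}(ħ)·R_{13}(2ħ)·R_{12}(ħ) (i.e. R_rat evaluated at the differences of the points z, z−ħ, z−2ħ) equals the antisymmetrizer A₃ = Σ_{σ∈S₃} sgn(σ)·P_σ acting on (ℂ^n)^{⊗3}, where P_σ permutes the tensor factors according to σ. -/
open Matrix Equiv

/-- The operator `P_σ` on `(ℂ^n)^{⊗3}` permuting the tensor factors according to `σ`:
`P_σ (v₁ ⊗ v₂ ⊗ v₃) = v_{σ⁻¹(1)} ⊗ v_{σ⁻¹(2)} ⊗ v_{σ⁻¹(3)}`, realized as a matrix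
indexed by `Fin 3 → Fin n`. -/
noncomputable def permFactors (n : ℕ) (σ : Equiv.Perm (Fin 3)) :
    Matrix (Fin 3 → Fin n) (Fin 3 → Fin n) ℂ :=
  Matrix.of fun i j => if i = fun a => j (σ⁻¹ a) then 1 else 0

/-- The antisymmetrizer `A₃ = Σ_{σ∈S₃} sgn(σ)·P_σ` on `(ℂ^n)^{⊗3}`. -/
noncomputable def antisym3 (n : ℕ) : Matrix (Fin 3 → Fin n) (Fin 3 → Fin n) ℂ :=
  ∑ σ : Equiv.Perm (Fin 3), ((Equiv.Perm.sign σ : ℤ) : ℂ) • permFactors n σ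

lemma permFactors_one (n : ℕ) : permFactors n 1 = 1 := by
  ext i j
  simp [permFactors, Matrix.one_apply, funext_iff, eq_comm]

lemma permFactors_mul (n : ℕ) (σ τ : Equiv.Perm (Fin 3)) :
    permFactors n σ * permFactors n τ = permFactors n (σ * τ) := by
  ext i j
  simp only [permFactors, Matrix.mul_apply, Matrix.of_apply]
  rw [Finset.sum_eq_single (fun a => j (τ⁻¹ a))]
  · simp only [if_pos rfl, mul_one]
    simp [funext_iff]
  · intro k _ hk
    rw [if_neg hk, mul_zero]
  · simp

/-- For `R_rat(u) = Id − (ħ/u)·P`, the fused product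
`R_{23}(ħ)·R_{13}(2ħ)·R_{12}(ħ)` (i.e. `R_rat` evaluated at the differences of the points
`z, z−ħ, z−2ħ`) equals the antisymmetrizer `A₃`; explicitly
`(Id − P₂₃)(Id − ½P₁₃)(Id − P₁₂) = A₃`. Here the tensor factors are indexed `0,1,2`. -/
theorem stmt3 (n : ℕ) :
    (1 - permFactors n (Equiv.swap 1 2)) *
      (1 - (2 : ℂ)⁻¹ • permFactors n (Equiv.swap 0 2)) *
      (1 - permFactors n (Equiv.swap 0 1)) = antisym3 n := by
  have huniv : (Finset.univ : Finset (Equiv.Perm (Fin 3))) =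
      {1, Equiv.swap 0 1, Equiv.swap 0 2, Equiv.swap 1 2,
        Equiv.swap 0 2 * Equiv.swap 0 1, Equiv.swap 1 2 * Equiv.swap 0 1} := by decide
  have hs : ∀ a b : Fin 3, a ≠ b → Equiv.Perm.sign (Equiv.swap a b) = -1 := fun a b h =>
    Equiv.Perm.sign_swap h
  rw [antisym3, huniv]
  rw [Finset.sum_insert (by decide), Finset.sum_insert (by decide),
    Finset.sum_insert (by decide), Finset.sum_insert (by decide),
    Finset.sum_insert (by decide), Finset.sum_singleton]
  have e1 : Equiv.swap 1 2 * Equiv.swap 0 2 = (Equiv.swap 0 2 * Equiv.swap 0 1 :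
      Equiv.Perm (Fin 3)) := by decide
  have e3 : (Equiv.swap 0 2 * Equiv.swap 0 1) * Equiv.swap 0 1 = (Equiv.swap 0 2 :
      Equiv.Perm (Fin 3)) := by decide
  simp only [Equiv.Perm.sign_mul, hs 0 1 (by decide), hs 0 2 (by decide), hs 1 2 (by decide),
    Equiv.Perm.sign_one, permFactors_one]
  simp only [mul_sub, sub_mul, one_mul, mul_one, Matrix.mul_smul, Matrix.smul_mul,
    ← mul_assoc, permFactors_mul, e1, e3]
  push_cast
  simp only [neg_mul, one_mul, neg_neg, neg_smul, one_smul]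
  module
end

section
/- The trigonometric R-matrix satisfies the crossing-unitarity relation R_trig(z,w) · P · R_trig(w,z) · P = (vz − v^{−1}w)(vw − v^{−1}z) · Id in End(ℂ^n ⊗ ℂ^n); equivalently, R_trig(z,w) = (vz − v^{−1}w)(vw − v^{−1}z) · P R_trig(w,z)^{−1} P^{−1} when the right-hand scalar is invertible. -/
open Matrix
open scoped Kronecker

section helpers
variable {n : ℕ} {R : Type*} [CommRing R]

lemma collapse (f : Fin n → Fin n → R) (a b : Fin n)
    (h : ∀ i j, ¬(i = a ∧ j = b) → f i j = 0) : (∑ i, ∑ j, f i j) = f a b := by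
  rw [Finset.sum_eq_single a, Finset.sum_eq_single b]
  · intro j _ hj; exact h a j (by tauto)
  · intro hb; exact absurd (Finset.mem_univ b) hb
  · intro i _ hi
    rw [Finset.sum_eq_zero]
    intro j _; exact h i j (by tauto)
  · intro hb; exact absurd (Finset.mem_univ a) hb

lemma collapse1 (f : Fin n → R) (a : Fin n)
    (h : ∀ i, i ≠ a → f i = 0) : (∑ i, f i) = f a :=
  Finset.sum_eq_single a (fun i _ hi => h i hi) (fun hb => absurd (Finset.mem_univ a) hb)

lemma myD_apply (a b c d : Fin n) :
    (∑ i : Fin n, (Matrix.single i i (1 : R)) ⊗ₖ (Matrix.single i i (1 : R)))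
      (a,b) (c,d) = if a = b ∧ b = c ∧ c = d then 1 else 0 := by
  rw [Matrix.sum_apply]
  rw [collapse1 _ a]
  · simp only [Matrix.kroneckerMap_apply, Matrix.single, Matrix.of_apply]
    split_ifs <;> first | rfl | (exfalso; omega) | simp_all <;> omega
  · intro i hi
    simp only [Matrix.kroneckerMap_apply, Matrix.single, Matrix.of_apply]
    split_ifs <;> first | rfl | (exfalso; omega) | simp_all <;> omega

lemma myNe_apply (a b c d : Fin n) :
    (∑ i : Fin n, ∑ j : Fin n, (if i ≠ j then
        (Matrix.single i i (1 : R)) ⊗ₖ (Matrix.single j j (1 : R)) else 0))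
      (a,b) (c,d) = if a = c ∧ b = d ∧ a ≠ b then 1 else 0 := by
  rw [show (∑ i : Fin n, ∑ j : Fin n, (if i ≠ j then
        (Matrix.single i i (1 : R)) ⊗ₖ (Matrix.single j j (1 : R)) else 0))
      (a,b) (c,d) = ∑ i : Fin n, ∑ j : Fin n, (if i ≠ j then
        (Matrix.single i i (1 : R)) ⊗ₖ (Matrix.single j j (1 : R)) else 0)
      (a,b) (c,d) by simp [Matrix.sum_apply]]
  rw [collapse _ a b]
  · simp only [Matrix.kroneckerMap_apply, Matrix.single, Matrix.of_apply,
      Matrix.zero_apply, ite_apply]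
    split_ifs <;> first | rfl | (exfalso; omega) | simp_all <;> omega
  · intro i j hij
    simp only [Matrix.kroneckerMap_apply, Matrix.single, Matrix.of_apply,
      Matrix.zero_apply, ite_apply]
    split_ifs <;> first | rfl | (exfalso; omega) | simp_all <;> omega

lemma myL_apply (a b c d : Fin n) :
    (∑ i : Fin n, ∑ j : Fin n, (if i < j then
        (Matrix.single i j (1 : R)) ⊗ₖ (Matrix.single j i (1 : R)) else 0))
      (a,b) (c,d) = if a = d ∧ b = c ∧ a < b then 1 else 0 := by
  rw [show (∑ i : Fin n, ∑ j : Fin n, (if i < j then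
        (Matrix.single i j (1 : R)) ⊗ₖ (Matrix.single j i (1 : R)) else 0))
      (a,b) (c,d) = ∑ i : Fin n, ∑ j : Fin n, (if i < j then
        (Matrix.single i j (1 : R)) ⊗ₖ (Matrix.single j i (1 : R)) else 0)
      (a,b) (c,d) by simp [Matrix.sum_apply]]
  rw [collapse _ a c]
  · simp only [Matrix.kroneckerMap_apply, Matrix.single, Matrix.of_apply,
      Matrix.zero_apply, ite_apply]
    split_ifs <;> first | rfl | (exfalso; omega) | simp_all <;> omega
  · intro i j hij
    simp only [Matrix.kroneckerMap_apply, Matrix.single, Matrix.of_apply,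
      Matrix.zero_apply, ite_apply]
    split_ifs <;> first | rfl | (exfalso; omega) | simp_all <;> omega

lemma myU_apply (a b c d : Fin n) :
    (∑ i : Fin n, ∑ j : Fin n, (if j < i then
        (Matrix.single i j (1 : R)) ⊗ₖ (Matrix.single j i (1 : R)) else 0))
      (a,b) (c,d) = if a = d ∧ b = c ∧ b < a then 1 else 0 := by
  rw [show (∑ i : Fin n, ∑ j : Fin n, (if j < i then
        (Matrix.single i j (1 : R)) ⊗ₖ (Matrix.single j i (1 : R)) else 0))
      (a,b) (c,d) = ∑ i : Fin n, ∑ j : Fin n, (if j < i then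
        (Matrix.single i j (1 : R)) ⊗ₖ (Matrix.single j i (1 : R)) else 0)
      (a,b) (c,d) by simp [Matrix.sum_apply]]
  rw [collapse _ a c]
  · simp only [Matrix.kroneckerMap_apply, Matrix.single, Matrix.of_apply,
      Matrix.zero_apply, ite_apply]
    split_ifs <;> first | rfl | (exfalso; omega) | simp_all <;> omega
  · intro i j hij
    simp only [Matrix.kroneckerMap_apply, Matrix.single, Matrix.of_apply,
      Matrix.zero_apply, ite_apply]
    split_ifs <;> first | rfl | (exfalso; omega) | simp_all <;> omega

end helpers

section helpers2
variable {n : ℕ} {R : Type*} [CommRing R]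

lemma csum1 (x : R) (g : Fin n → Fin n → R) (a b : Fin n) :
    (∑ e : Fin n, ∑ f : Fin n, (if a = b ∧ b = f ∧ f = e then x else 0) * g e f)
      = (if a = b then x else 0) * g b b := by
  rw [collapse _ b b]
  · split_ifs <;> first | rfl | (exfalso; omega)
  · intro i j hij
    split_ifs with h
    · exact absurd ⟨by omega, by omega⟩ hij
    · exact zero_mul _

lemma csum2 (p : Prop) [Decidable p] (x : R) (g : Fin n → Fin n → R) (a b : Fin n) :
    (∑ e : Fin n, ∑ f : Fin n, (if a = f ∧ b = e ∧ p then x else 0) * g e f)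
      = (if p then x else 0) * g b a := by
  rw [collapse _ b a]
  · split_ifs <;> first | rfl | tauto
  · intro i j hij
    split_ifs with h
    · exact absurd ⟨h.2.1.symm, h.1.symm⟩ hij
    · exact zero_mul _

lemma csum3 (p : Prop) [Decidable p] (x : R) (g : Fin n → Fin n → R) (a b : Fin n) :
    (∑ e : Fin n, ∑ f : Fin n, (if a = e ∧ b = f ∧ p then x else 0) * g e f)
      = (if p then x else 0) * g a b := by
  rw [collapse _ a b]
  · split_ifs <;> first | rfl | tauto
  · intro i j hij
    split_ifs with h
    · exact absurd ⟨h.1.symm, h.2.1.symm⟩ hij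
    · exact zero_mul _

end helpers2

/-- The trigonometric R-matrix
`R_trig(z,w) = (vz − v⁻¹w) Σ_i E_ii⊗E_ii + (z − w) Σ_{i≠j} E_ii⊗E_jj
  + (v − v⁻¹) z Σ_{i<j} E_ij⊗E_ji + (v − v⁻¹) w Σ_{i>j} E_ij⊗E_ji`. -/
def Rtrig (n : ℕ) {R : Type*} [CommRing R] (v : Rˣ) (z w : R) :
    Matrix (Fin n × Fin n) (Fin n × Fin n) R :=
  ((v : R) * z - ((v⁻¹ : Rˣ) : R) * w) • ∑ i : Fin n,
      (Matrix.single i i (1 : R)) ⊗ₖ (Matrix.single i i (1 : R))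
  + (z - w) • ∑ i : Fin n, ∑ j : Fin n,
      (if i ≠ j then (Matrix.single i i (1 : R)) ⊗ₖ (Matrix.single j j (1 : R))
        else 0)
  + (((v : R) - ((v⁻¹ : Rˣ) : R)) * z) • ∑ i : Fin n, ∑ j : Fin n,
      (if i < j then (Matrix.single i j (1 : R)) ⊗ₖ (Matrix.single j i (1 : R))
        else 0)
  + (((v : R) - ((v⁻¹ : Rˣ) : R)) * w) • ∑ i : Fin n, ∑ j : Fin n,
      (if j < i then (Matrix.single i j (1 : R)) ⊗ₖ (Matrix.single j i (1 : R))
        else 0)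


/-- The permutation operator `P = Σ_{i,j} E_ij ⊗ E_ji`. -/
def permOp (n : ℕ) (R : Type*) [CommRing R] :
    Matrix (Fin n × Fin n) (Fin n × Fin n) R :=
  ∑ i : Fin n, ∑ j : Fin n,
    (Matrix.single i j (1 : R)) ⊗ₖ (Matrix.single j i (1 : R))

section helpers3
variable {n : ℕ} {R : Type*} [CommRing R]

lemma Rtrig_apply (v : Rˣ) (z w : R) (a b c d : Fin n) :
    Rtrig n v z w (a,b) (c,d) =
      (if a = b ∧ b = c ∧ c = d then ((v : R) * z - ((v⁻¹ : Rˣ) : R) * w) else 0)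
      + (if a = c ∧ b = d ∧ a ≠ b then z - w else 0)
      + (if a = d ∧ b = c ∧ a < b then ((v : R) - ((v⁻¹ : Rˣ) : R)) * z else 0)
      + (if a = d ∧ b = c ∧ b < a then ((v : R) - ((v⁻¹ : Rˣ) : R)) * w else 0) := by
  show (_ + _ + _ + _ : Matrix _ _ R) (a,b) (c,d) = _
  simp only [Matrix.add_apply, Matrix.smul_apply, myD_apply, myNe_apply, myL_apply, myU_apply,
    smul_eq_mul, mul_ite, mul_one, mul_zero]

lemma permOp_apply (a b c d : Fin n) :
    permOp n R (a,b) (c,d) = if a = d ∧ b = c then 1 else 0 := by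
  rw [show permOp n R (a,b) (c,d) = ∑ i : Fin n, ∑ j : Fin n,
      ((Matrix.single i j (1 : R)) ⊗ₖ (Matrix.single j i (1 : R))) (a,b) (c,d) by
    simp [permOp, Matrix.sum_apply]]
  rw [collapse _ a c]
  · simp only [Matrix.kroneckerMap_apply, Matrix.single, Matrix.of_apply]
    split_ifs <;> first | rfl | (exfalso; omega) | simp_all <;> omega
  · intro i j hij
    simp only [Matrix.kroneckerMap_apply, Matrix.single, Matrix.of_apply]
    split_ifs <;> first | rfl | (exfalso; omega) | simp_all <;> omega

lemma mul_permOp (M : Matrix (Fin n × Fin n) (Fin n × Fin n) R) (p : Fin n × Fin n)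
    (c d : Fin n) : (M * permOp n R) p (c,d) = M p (d,c) := by
  rw [Matrix.mul_apply, Fintype.sum_prod_type]
  rw [collapse (fun e f => M p (e,f) * permOp n R (e,f) (c,d)) d c]
  · simp [permOp_apply]
  · intro e f hef
    rw [permOp_apply, if_neg hef, mul_zero]

end helpers3

set_option maxHeartbeats 3200000 in
/-- Crossing-unitarity of the trigonometric R-matrix:
`R_trig(z,w) · P · R_trig(w,z) · P = (vz − v⁻¹w)(vw − v⁻¹z) · Id`;
equivalently (when the scalar is invertible)
`R_trig(z,w) = (vz − v⁻¹w)(vw − v⁻¹z) · P R_trig(w,z)⁻¹ P⁻¹`. -/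
theorem stmt8 (n : ℕ) {R : Type*} [CommRing R] (v : Rˣ) (z w : R) :
    Rtrig n v z w * permOp n R * Rtrig n v w z * permOp n R =
      (((v : R) * z - ((v⁻¹ : Rˣ) : R) * w) * ((v : R) * w - ((v⁻¹ : Rˣ) : R) * z)) •
        (1 : Matrix (Fin n × Fin n) (Fin n × Fin n) R) := by
  have hv : (v : R) * ((v⁻¹ : Rˣ) : R) = 1 := Units.mul_inv v
  ext ⟨a, b⟩ ⟨c, d⟩
  rw [mul_permOp (Rtrig n v z w * permOp n R * Rtrig n v w z) (a, b) c d,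
    Matrix.mul_apply, Fintype.sum_prod_type]
  simp only [mul_permOp, Rtrig_apply, add_mul, Finset.sum_add_distrib, csum1, csum2, csum3]
  simp only [Matrix.smul_apply, Matrix.one_apply, Prod.mk.injEq, smul_eq_mul, mul_ite, mul_one,
    mul_zero, ite_mul, zero_mul, ite_and]
  split_ifs <;>
    first
      | (exfalso; omega)
      | ring1
      | linear_combination (z - w) ^ 2 * hv
      | linear_combination (-(z - w) ^ 2) * hv
      | linear_combination ((z - w) ^ 2 * z * w) * hv
end

section
/- Let A be an associative unital algebra over a commutative ring, n ≥ 2, and let elements t^{(r)}_{ij} ∈ A (1 ≤ i,j ≤ n, r ≥ 1) satisfy the Yangian degree-one commutation relations: for all i,j,k,l and all r ≥ 1, [t^{(r)}_{ij}, t^{(1)}_{kl}] = δ_{kj} t^{(r)}_{il} − δ_{il} t^{(r)}_{kj}. Then the two-sided ideal I of A generated by the elements {t^{(r)}_{11} : r ≥ 2} contains t^{(r)}_{ij} for all 1 ≤ i,j ≤ n and all r ≥ 2. -/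
/-- Let `A` be an associative unital algebra over a commutative ring, `n ≥ 2`, and let
`t^{(r)}_{ij} ∈ A` (indices in `Fin n`, `r ≥ 1`) satisfy the Yangian degree-one commutation
relations `[t^{(r)}_{ij}, t^{(1)}_{kl}] = δ_{kj} t^{(r)}_{il} − δ_{il} t^{(r)}_{kj}`.
Then the two-sided ideal of `A` generated by `{t^{(r)}_{11} : r ≥ 2}` contains all
`t^{(r)}_{ij}` with `r ≥ 2`. -/
theorem stmt11 {R A : Type*} [CommRing R] [Ring A] [Algebra R A]
    (n : ℕ) (hn : 2 ≤ n) (t : ℕ → Fin n → Fin n → A)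
    (hrel : ∀ r : ℕ, 1 ≤ r → ∀ i j k l : Fin n,
      t r i j * t 1 k l - t 1 k l * t r i j =
        (if k = j then t r i l else 0) - (if i = l then t r k j else 0)) :
    ∀ r : ℕ, 2 ≤ r → ∀ i j : Fin n,
      t r i j ∈
        TwoSidedIdeal.span
          {x : A | ∃ s : ℕ, 2 ≤ s ∧ x = t s ⟨0, by omega⟩ ⟨0, by omega⟩} := by
  intro r hr i j
  set z : Fin n := ⟨0, by omega⟩ with hzdef
  set I := TwoSidedIdeal.span {x : A | ∃ s : ℕ, 2 ≤ s ∧ x = t s z z} with hI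
  have hz : t r z z ∈ I := TwoSidedIdeal.subset_span ⟨r, hr, rfl⟩
  have h1 : ∀ l : Fin n, t r z l ∈ I := by
    intro l
    have h := hrel r (by omega) z z z l
    simp only [eq_self_iff_true, if_true] at h
    have : t r z l = (t r z z * t 1 z l - t 1 z l * t r z z)
        + (if z = l then t r z z else 0) := by rw [h]; abel
    rw [this]
    refine I.add_mem (I.sub_mem (I.mul_mem_right _ _ hz) (I.mul_mem_left _ _ hz)) ?_
    split <;> simp [hz, I.zero_mem]
  have h2 := hrel r (by omega) z j i z
  simp only [eq_self_iff_true, if_true] at h2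
  have : t r i j = (if i = j then t r z z else 0)
      - (t r z j * t 1 i z - t 1 i z * t r z j) := by rw [h2]; abel
  rw [this]
  refine I.sub_mem ?_ (I.sub_mem (I.mul_mem_right _ _ (h1 j)) (I.mul_mem_left _ _ (h1 j)))
  split <;> simp [hz, I.zero_mem]
end

section
/- Let A be a Hopf algebra over ℂ[ħ], and define its Drinfeld–Gavarini dual A' := { a ∈ A : δ_n(a) ∈ ħ^n A^{⊗n} for all n ≥ 1 }, where δ_n = (id − η∘ε)^{⊗n} ∘ Δ^n. Then A' is a ℂ[ħ]-subalgebra of A containing 1. -/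
open TensorProduct

variable (R : Type*) [CommRing R] (A : Type*) [Ring A] [Bialgebra R A]

/-- `TpowM R A n` is the `(n+1)`-fold tensor power `A ⊗ ⋯ ⊗ A` (so `TpowM R A 0 = A`),
bundled as an object of the category of `R`-modules. -/
noncomputable def TpowM : ℕ → ModuleCat R
  | 0 => ModuleCat.of R A
  | (n + 1) => ModuleCat.of R (A ⊗[R] (TpowM n))

/-- The iterated coproduct `Δ^{n+1} : A → A^{⊗(n+1)}`, defined by `Δ¹ = id` and
`Δ^{n+1} = (Δ ⊗ id^{⊗(n−1)}) ∘ Δ^n` (with the evident reassociation). -/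
noncomputable def iterComul : (n : ℕ) → (A →ₗ[R] TpowM R A n)
  | 0 => LinearMap.id
  | 1 => Coalgebra.comul
  | (n + 2) =>
      (TensorProduct.assoc R A A (TpowM R A n)).toLinearMap ∘ₗ
        (TensorProduct.map (Coalgebra.comul (R := R) (A := A)) LinearMap.id) ∘ₗ
          iterComul (n + 1)

/-- The projection `id − η∘ε : A → A`, `a ↦ a − ε(a)·1`. -/
noncomputable def projCounit : A →ₗ[R] A :=
  LinearMap.id - (Algebra.linearMap R A) ∘ₗ (Coalgebra.counit (R := R) (A := A))

/-- `(id − η∘ε)^{⊗(n+1)}` on the `(n+1)`-fold tensor power. -/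
noncomputable def projPow : (n : ℕ) → (TpowM R A n →ₗ[R] TpowM R A n)
  | 0 => projCounit R A
  | (n + 1) => TensorProduct.map (projCounit R A) (projPow n)

/-- `δ_{n+1} := (id − η∘ε)^{⊗(n+1)} ∘ Δ^{n+1} : A → A^{⊗(n+1)}`. -/
noncomputable def deltaMap (n : ℕ) : A →ₗ[R] TpowM R A n :=
  projPow R A n ∘ₗ iterComul R A n

-- auxiliary definitions

noncomputable def insT : (k n : ℕ) → (TpowM R A n →ₗ[R] TpowM R A (n + 1))
  | 0, n => TensorProduct.mk R A (TpowM R A n) 1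
  | _ + 1, 0 => (TensorProduct.mk R A A).flip 1
  | k + 1, n + 1 => TensorProduct.map LinearMap.id (insT k n)

noncomputable def projPrefix : (k n : ℕ) → (TpowM R A n →ₗ[R] TpowM R A n)
  | 0, _ => LinearMap.id
  | _ + 1, 0 => projCounit R A
  | k + 1, n + 1 => TensorProduct.map (projCounit R A) (projPrefix k n)

noncomputable def mulT : (n : ℕ) → (TpowM R A n →ₗ[R] TpowM R A n →ₗ[R] TpowM R A n)
  | 0 => LinearMap.mul R A
  | n + 1 => TensorProduct.map₂ (LinearMap.mul R A) (mulT n)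

variable (h : R)

noncomputable def T0 : Submodule R A :=
  Submodule.span R {x : A | (∃ y, x = h • y) ∨ x = 1}

noncomputable def Tsub : (n : ℕ) → Submodule R (TpowM R A n)
  | 0 => T0 R A h
  | n + 1 => Submodule.span R
      {x : TpowM R A (n + 1) | ∃ a ∈ T0 R A h, ∃ t ∈ Tsub n, x = a ⊗ₜ[R] t}

noncomputable def Psub : (n k : ℕ) → Submodule R (TpowM R A n)
  | n, 0 => Tsub R A h n
  | 0, k + 1 => LinearMap.range ((h ^ (k + 1)) • (LinearMap.id : A →ₗ[R] A))
  | n + 1, k + 1 => Submodule.span R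
      {x : TpowM R A (n + 1) | ∃ (a : A), ∃ t ∈ Psub n k, x = (h • a) ⊗ₜ[R] t}

lemma iterComul_succ (n : ℕ) :
    iterComul R A (n + 1) =
      (TensorProduct.map LinearMap.id (iterComul R A n)) ∘ₗ
        (Coalgebra.comul (R := R) (A := A)) := by
  induction n with
  | zero =>
    ext a
    simp [iterComul, TensorProduct.map_id]
    show _ = (TensorProduct.map (LinearMap.id : A →ₗ[R] A) (LinearMap.id : A →ₗ[R] A) ∘ₗ
      Coalgebra.comul (R := R) (A := A)) a
    rw [TensorProduct.map_id, LinearMap.id_comp]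
    exact rfl
  | succ n ih =>
    rw [iterComul, ih]
    apply LinearMap.ext; intro a
    have nat : ∀ w : A ⊗[R] A,
        (TensorProduct.assoc R A A (TpowM R A n)).toLinearMap
          ((TensorProduct.map (Coalgebra.comul (R := R) (A := A)) LinearMap.id)
            ((TensorProduct.map LinearMap.id (iterComul R A n)) w)) =
        (TensorProduct.map LinearMap.id (TensorProduct.map LinearMap.id (iterComul R A n)))
          ((TensorProduct.assoc R A A A).toLinearMap
            ((TensorProduct.map (Coalgebra.comul (R := R) (A := A)) LinearMap.id) w)) := by
      intro w
      induction w using TensorProduct.induction_on with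
      | zero => simp
      | tmul x y =>
        simp only [TensorProduct.map_tmul, LinearMap.id_coe, id_eq,
          LinearEquiv.coe_coe]
        induction (Coalgebra.comul (R := R) (A := A) x) using TensorProduct.induction_on with
        | zero => simp
        | tmul u v => simp [TensorProduct.assoc_tmul]
        | add p q hp hq => simp [add_tmul, hp, hq]
      | add p q hp hq => simp only [map_add, LinearEquiv.coe_coe] at hp hq ⊢; rw [hp, hq]
    refine (nat (Coalgebra.comul a)).trans ?_
    have coas : (TensorProduct.assoc R A A A).toLinearMap
        ((TensorProduct.map (Coalgebra.comul (R := R) (A := A)) LinearMap.id)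
          (Coalgebra.comul (R := R) a)) =
        (TensorProduct.map LinearMap.id (Coalgebra.comul (R := R) (A := A)))
          (Coalgebra.comul (R := R) a) := by
      have := Coalgebra.coassoc_apply (R := R) a
      simpa [LinearMap.rTensor, LinearMap.lTensor] using this
    rw [coas]
    have : ∀ w : A ⊗[R] A,
        (TensorProduct.map LinearMap.id (TensorProduct.map LinearMap.id (iterComul R A n)))
          ((TensorProduct.map LinearMap.id (Coalgebra.comul (R := R) (A := A))) w) =
        (TensorProduct.map LinearMap.id
          ((TensorProduct.map LinearMap.id (iterComul R A n)) ∘ₗ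
            (Coalgebra.comul (R := R) (A := A)))) w := by
      intro w
      induction w using TensorProduct.induction_on with
      | zero => simp
      | tmul x y => simp
      | add p q hp hq => simp only [map_add] at hp hq ⊢; rw [hp, hq]
    rw [this]
    rfl

noncomputable def etaEps : A →ₗ[R] A :=
  (Algebra.linearMap R A) ∘ₗ (Coalgebra.counit (R := R) (A := A))

lemma projCounit_add_etaEps : projCounit R A + etaEps R A = LinearMap.id := by
  simp [projCounit, etaEps]

lemma map_etaEps_comul (a : A) :
    (TensorProduct.map (etaEps R A) (LinearMap.id : A →ₗ[R] A))
      (Coalgebra.comul (R := R) a) = (1 : A) ⊗ₜ[R] a := by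
  have h1 : (TensorProduct.map (Coalgebra.counit (R := R) (A := A))
      (LinearMap.id : A →ₗ[R] A)) (Coalgebra.comul (R := R) a) = (1 : R) ⊗ₜ[R] a := by
    have := Coalgebra.rTensor_counit_comul (R := R) a
    simpa [LinearMap.rTensor] using this
  have h2 : TensorProduct.map (etaEps R A) (LinearMap.id : A →ₗ[R] A) =
      (TensorProduct.map (Algebra.linearMap R A) (LinearMap.id : A →ₗ[R] A)) ∘ₗ
        (TensorProduct.map (Coalgebra.counit (R := R) (A := A))
          (LinearMap.id : A →ₗ[R] A)) := by
    rw [← TensorProduct.map_comp]; rfl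
  rw [h2, LinearMap.comp_apply, h1]
  simp

lemma map_etaEps_comul' (a : A) :
    (TensorProduct.map (LinearMap.id : A →ₗ[R] A) (etaEps R A))
      (Coalgebra.comul (R := R) a) = a ⊗ₜ[R] (1 : A) := by
  have h1 : (TensorProduct.map (LinearMap.id : A →ₗ[R] A)
      (Coalgebra.counit (R := R) (A := A))) (Coalgebra.comul (R := R) a)
      = a ⊗ₜ[R] (1 : R) := by
    have := Coalgebra.lTensor_counit_comul (R := R) a
    simpa [LinearMap.lTensor] using this
  have h2 : TensorProduct.map (LinearMap.id : A →ₗ[R] A) (etaEps R A) =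
      (TensorProduct.map (LinearMap.id : A →ₗ[R] A) (Algebra.linearMap R A)) ∘ₗ
        (TensorProduct.map (LinearMap.id : A →ₗ[R] A)
          (Coalgebra.counit (R := R) (A := A))) := by
    rw [← TensorProduct.map_comp]; rfl
  rw [h2, LinearMap.comp_apply, h1]
  simp

lemma projPrefix_top : ∀ n : ℕ, projPrefix R A (n + 1) n = projPow R A n
  | 0 => rfl
  | (n + 1) => by
    show TensorProduct.map (projCounit R A) (projPrefix R A (n + 1) n) = _
    rw [projPrefix_top n]; rfl

lemma map_map_apply {M N P Q U V : Type*}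
    [AddCommMonoid M] [Module R M] [AddCommMonoid N] [Module R N]
    [AddCommMonoid P] [Module R P] [AddCommMonoid Q] [Module R Q]
    [AddCommMonoid U] [Module R U] [AddCommMonoid V] [Module R V]
    (f₂ : P →ₗ[R] U) (f₁ : M →ₗ[R] P) (g₂ : Q →ₗ[R] V) (g₁ : N →ₗ[R] Q)
    (w : M ⊗[R] N) :
    (TensorProduct.map f₂ g₂) ((TensorProduct.map f₁ g₁) w) =
      (TensorProduct.map (f₂ ∘ₗ f₁) (g₂ ∘ₗ g₁)) w := by
  rw [TensorProduct.map_comp]; rfl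

lemma iterComul_succ_apply (n : ℕ) (a : A) :
    iterComul R A (n + 1) a =
      (TensorProduct.map LinearMap.id (iterComul R A n))
        (Coalgebra.comul (R := R) a) :=
  LinearMap.congr_fun (iterComul_succ R A n) a

lemma skey : ∀ (k n : ℕ), k ≤ n + 1 → ∀ a : A,
    projPrefix R A k (n + 1) (iterComul R A (n + 1) a) =
      projPrefix R A (k + 1) (n + 1) (iterComul R A (n + 1) a) +
        insT R A k n (projPrefix R A k n (iterComul R A n a)) := by
  intro k
  induction k with
  | zero =>
    intro n _ a
    have e0 : (TensorProduct.map (LinearMap.id : A →ₗ[R] A) (iterComul R A n)) =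
        TensorProduct.map (projCounit R A) (iterComul R A n) +
          TensorProduct.map (etaEps R A) (iterComul R A n) := by
      rw [← TensorProduct.map_add_left, projCounit_add_etaEps]
    have e1 : (TensorProduct.map (projCounit R A) (LinearMap.id : TpowM R A n →ₗ[R] TpowM R A n))
        ((TensorProduct.map (LinearMap.id : A →ₗ[R] A) (iterComul R A n))
          (Coalgebra.comul (R := R) a)) =
        (TensorProduct.map (projCounit R A) (iterComul R A n)) (Coalgebra.comul (R := R) a) := by
      rw [map_map_apply, LinearMap.comp_id, LinearMap.id_comp]
    have e2 : (TensorProduct.map (etaEps R A) (iterComul R A n)) (Coalgebra.comul (R := R) a) =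
        (1 : A) ⊗ₜ[R] (iterComul R A n a) := by
      have e2' : TensorProduct.map (etaEps R A) (iterComul R A n) =
          (TensorProduct.map (LinearMap.id : A →ₗ[R] A) (iterComul R A n)) ∘ₗ
            (TensorProduct.map (etaEps R A) (LinearMap.id : A →ₗ[R] A)) := by
        rw [← TensorProduct.map_comp, LinearMap.id_comp, LinearMap.comp_id]
      rw [e2', LinearMap.comp_apply, map_etaEps_comul, TensorProduct.map_tmul]
      simp
    show iterComul R A (n + 1) a =
      (TensorProduct.map (projCounit R A) (projPrefix R A 0 n)) (iterComul R A (n + 1) a) +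
        (TensorProduct.mk R A (TpowM R A n)) 1
          ((LinearMap.id : TpowM R A n →ₗ[R] TpowM R A n) (iterComul R A n a))
    rw [iterComul_succ_apply]
    show (TensorProduct.map (LinearMap.id : A →ₗ[R] A) (iterComul R A n))
        (Coalgebra.comul (R := R) a) =
      (TensorProduct.map (projCounit R A) (LinearMap.id : TpowM R A n →ₗ[R] TpowM R A n))
        ((TensorProduct.map (LinearMap.id : A →ₗ[R] A) (iterComul R A n))
          (Coalgebra.comul (R := R) a)) + (1 : A) ⊗ₜ[R] (iterComul R A n a)
    rw [e1, e0]
    simp only [LinearMap.add_apply, e2]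
  | succ k ih =>
    intro n hk a
    cases n with
    | zero =>
      have hk0 : k = 0 := by omega
      subst hk0
      have e0 : (TensorProduct.map (projCounit R A) (LinearMap.id : A →ₗ[R] A)) =
          TensorProduct.map (projCounit R A) (projCounit R A) +
            TensorProduct.map (projCounit R A) (etaEps R A) := by
        rw [← TensorProduct.map_add_right, projCounit_add_etaEps]
      have e2 : (TensorProduct.map (projCounit R A) (etaEps R A))
          (Coalgebra.comul (R := R) a) = (projCounit R A a) ⊗ₜ[R] (1 : A) := by
        have e2' : TensorProduct.map (projCounit R A) (etaEps R A) =
            (TensorProduct.map (projCounit R A) (LinearMap.id : A →ₗ[R] A)) ∘ₗ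
              (TensorProduct.map (LinearMap.id : A →ₗ[R] A) (etaEps R A)) := by
          rw [← TensorProduct.map_comp, LinearMap.id_comp, LinearMap.comp_id]
        rw [e2', LinearMap.comp_apply, map_etaEps_comul', TensorProduct.map_tmul]
        simp
      show (TensorProduct.map (projCounit R A) (LinearMap.id : A →ₗ[R] A))
          (iterComul R A 1 a) =
        (TensorProduct.map (projCounit R A) (projCounit R A)) (iterComul R A 1 a) +
          (projCounit R A (iterComul R A 0 a)) ⊗ₜ[R] (1 : A)
      have hic : iterComul R A 1 a = Coalgebra.comul (R := R) a := rfl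
      have hic0 : iterComul R A 0 a = a := rfl
      rw [hic, hic0, e0]
      simp only [LinearMap.add_apply, e2]
    | succ m =>
      have hk' : k ≤ m + 1 := by omega
      have hFGH : (projPrefix R A k (m + 1)) ∘ₗ (iterComul R A (m + 1)) =
          (projPrefix R A (k + 1) (m + 1)) ∘ₗ (iterComul R A (m + 1)) +
            (insT R A k m) ∘ₗ ((projPrefix R A k m) ∘ₗ (iterComul R A m)) :=
        LinearMap.ext fun a' => by
          have := ih m hk' a'
          simpa using this
      show (TensorProduct.map (projCounit R A) (projPrefix R A k (m + 1)))
          (iterComul R A (m + 2) a) =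
        (TensorProduct.map (projCounit R A) (projPrefix R A (k + 1) (m + 1)))
          (iterComul R A (m + 2) a) +
        (TensorProduct.map (LinearMap.id : A →ₗ[R] A) (insT R A k m))
          ((TensorProduct.map (projCounit R A) (projPrefix R A k m))
            (iterComul R A (m + 1) a))
      rw [iterComul_succ_apply R A (m + 1) a, iterComul_succ_apply R A m a]
      rw [map_map_apply, map_map_apply, map_map_apply, map_map_apply,
        LinearMap.comp_id, LinearMap.id_comp, LinearMap.comp_id]
      have comps : (TensorProduct.map (projCounit R A)
          ((projPrefix R A k (m + 1)) ∘ₗ (iterComul R A (m + 1))))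
            (Coalgebra.comul (R := R) a) =
          (TensorProduct.map (projCounit R A)
            ((projPrefix R A (k + 1) (m + 1)) ∘ₗ (iterComul R A (m + 1))))
            (Coalgebra.comul (R := R) a) +
          (TensorProduct.map (projCounit R A)
            ((insT R A k m) ∘ₗ ((projPrefix R A k m) ∘ₗ (iterComul R A m))))
            (Coalgebra.comul (R := R) a) := by
        rw [hFGH, TensorProduct.map_add_right]
        simp only [LinearMap.add_apply]
      rw [LinearMap.comp_assoc]
      exact comps

lemma Psub_zero (n : ℕ) : Psub R A h n 0 = Tsub R A h n := by
  cases n <;> rfl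

lemma one_mem_T0 : (1 : A) ∈ T0 R A h :=
  Submodule.subset_span (Or.inr rfl)

lemma smul_mem_T0 (y : A) : h • y ∈ T0 R A h :=
  Submodule.subset_span (Or.inl ⟨y, rfl⟩)

lemma pow_smul_mem_Psub (n : ℕ) : ∀ (x : TpowM R A n),
    h ^ (n + 1) • x ∈ Psub R A h n (n + 1) := by
  induction n with
  | zero => intro x; exact ⟨x, rfl⟩
  | succ n ih =>
    intro x
    induction x using TensorProduct.induction_on with
    | zero =>
      show h ^ (n + 1 + 1) • (0 : TpowM R A (n + 1)) ∈ _
      rw [smul_zero]; exact Submodule.zero_mem _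
    | tmul a t =>
      have e : h ^ (n + 1 + 1) • (a ⊗ₜ[R] t) = (h • a) ⊗ₜ[R] (h ^ (n + 1) • t) := by
        rw [pow_succ', mul_smul, ← tmul_smul, smul_tmul']
      show h ^ (n + 1 + 1) • (a ⊗ₜ[R] t) ∈ Psub R A h (n + 1) (n + 1 + 1)
      rw [e]
      exact Submodule.subset_span ⟨a, _, ih t, rfl⟩
    | add u v hu hv =>
      show h ^ (n + 1 + 1) • ((u : TpowM R A (n + 1)) + v) ∈ _
      rw [smul_add]; exact Submodule.add_mem _ hu hv

lemma Psub_mono (n : ℕ) : ∀ k, Psub R A h n (k + 1) ≤ Psub R A h n k := by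
  induction n with
  | zero =>
    intro k
    cases k with
    | zero =>
      rintro x ⟨y, rfl⟩
      show (h ^ (0 + 1) • LinearMap.id : A →ₗ[R] A) y ∈ T0 R A h
      refine Submodule.subset_span (Or.inl ⟨y, ?_⟩)
      show (h ^ (0 + 1) • LinearMap.id : A →ₗ[R] A) y = h • y
      rw [pow_one]
      rfl
    | succ k =>
      rintro x ⟨y, rfl⟩
      refine ⟨h • y, ?_⟩
      show h ^ (k + 1) • (h • y) = (h ^ (k + 1 + 1) • LinearMap.id : A →ₗ[R] A) y
      show h ^ (k + 1) • (h • y) = h ^ (k + 1 + 1) • y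
      rw [← mul_smul, ← pow_succ]
  | succ n ih =>
    intro k
    cases k with
    | zero =>
      refine Submodule.span_le.mpr ?_
      rintro x ⟨a, t, ht, rfl⟩
      exact Submodule.subset_span ⟨h • a, smul_mem_T0 R A h a, t, (Psub_zero R A h n) ▸ ht, rfl⟩
    | succ k =>
      refine Submodule.span_le.mpr ?_
      rintro x ⟨a, t, ht, rfl⟩
      exact Submodule.subset_span ⟨a, t, ih k ht, rfl⟩

lemma insT_mem : ∀ (k n : ℕ), k ≤ n + 1 → ∀ x ∈ Psub R A h n k,
    insT R A k n x ∈ Psub R A h (n + 1) k := by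
  intro k
  induction k with
  | zero =>
    intro n _ x hx
    rw [Psub_zero] at hx ⊢
    exact Submodule.subset_span ⟨1, one_mem_T0 R A h, x, hx, rfl⟩
  | succ k ih =>
    intro n hk x hx
    cases n with
    | zero =>
      have hk0 : k = 0 := by omega
      subst hk0
      obtain ⟨y, rfl⟩ := hx
      show ((h ^ (0 + 1) • LinearMap.id : A →ₗ[R] A) y) ⊗ₜ[R] (1 : A) ∈ Psub R A h 1 1
      have e : ((h ^ (0 + 1) • LinearMap.id : A →ₗ[R] A) y) = h • y := by
        show h ^ (0 + 1) • y = h • y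
        rw [pow_one]
      rw [e]
      exact Submodule.subset_span ⟨y, (1 : A), one_mem_T0 R A h, rfl⟩
    | succ m =>
      induction hx using Submodule.span_induction with
      | mem x hxs =>
        obtain ⟨a, t, ht, rfl⟩ := hxs
        have e : insT R A (k + 1) (m + 1) ((h • a) ⊗ₜ[R] t) =
            (h • a) ⊗ₜ[R] (insT R A k m t) := rfl
        rw [e]
        exact Submodule.subset_span ⟨a, insT R A k m t, ih m (by omega) t ht, rfl⟩
      | zero => rw [map_zero]; exact Submodule.zero_mem _
      | add u v _ _ hu hv => rw [map_add]; exact Submodule.add_mem _ hu hv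
      | smul c u _ hu => rw [map_smul]; exact Submodule.smul_mem _ _ hu

lemma theta_mem (a : A)
    (hGD : ∀ m : ℕ, ∃ y : TpowM R A m,
      projPow R A m (iterComul R A m a) = h ^ (m + 1) • y) :
    ∀ (j n k : ℕ), k + j = n + 1 →
      projPrefix R A k n (iterComul R A n a) ∈ Psub R A h n k := by
  intro j
  induction j with
  | zero =>
    intro n k hkn
    have hkn' : k = n + 1 := by omega
    subst hkn'
    rw [projPrefix_top]
    obtain ⟨y, hy⟩ := hGD n
    rw [hy]
    exact pow_smul_mem_Psub R A h n y
  | succ j ih =>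
    intro n k hkn
    cases n with
    | zero =>
      have hk0 : k = 0 := by omega
      subst hk0
      show (a : A) ∈ T0 R A h
      obtain ⟨y, hy⟩ := hGD 0
      have m1 : projCounit R A a ∈ T0 R A h := by
        have e0 : projCounit R A a = projPow R A 0 (iterComul R A 0 a) := rfl
        rw [e0, hy]
        simp only [zero_add, pow_one]
        exact smul_mem_T0 R A h y
      have e : a = projCounit R A a + Coalgebra.counit (R := R) a • (1 : A) := by
        simp [projCounit, Algebra.algebraMap_eq_smul_one]
      rw [e]
      exact Submodule.add_mem _ m1 (Submodule.smul_mem _ _ (one_mem_T0 R A h))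
    | succ m =>
      have hk : k ≤ m + 1 := by omega
      rw [skey R A k m hk a]
      refine Submodule.add_mem _ ?_ ?_
      · exact Psub_mono R A h (m + 1) k (ih (m + 1) (k + 1) (by omega))
      · exact insT_mem R A h k m (by omega) _ (ih m k (by omega))

lemma iterComul_mul : ∀ (n : ℕ) (a b : A),
    iterComul R A n (a * b) = mulT R A n (iterComul R A n a) (iterComul R A n b) := by
  intro n
  induction n with
  | zero => intro a b; rfl
  | succ n ih =>
    intro a b
    rw [iterComul_succ_apply, iterComul_succ_apply, iterComul_succ_apply,
      Bialgebra.comul_mul]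
    have key : ∀ x y : A ⊗[R] A,
        (TensorProduct.map LinearMap.id (iterComul R A n)) (x * y) =
          mulT R A (n + 1) ((TensorProduct.map LinearMap.id (iterComul R A n)) x)
            ((TensorProduct.map LinearMap.id (iterComul R A n)) y) := by
      intro x y
      induction x using TensorProduct.induction_on with
      | zero =>
        simp only [zero_mul, map_zero, LinearMap.zero_apply]
        exact (LinearMap.map_zero₂ (mulT R A (n + 1)) _).symm
      | tmul a1 a2 =>
        induction y using TensorProduct.induction_on with
        | zero =>
          simp only [mul_zero, map_zero]
          exact (map_zero _).symm
        | tmul b1 b2 =>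
          rw [Algebra.TensorProduct.tmul_mul_tmul]
          show (a1 * b1) ⊗ₜ[R] (iterComul R A n (a2 * b2)) =
            mulT R A (n + 1) (a1 ⊗ₜ[R] (iterComul R A n a2)) (b1 ⊗ₜ[R] (iterComul R A n b2))
          rw [ih a2 b2]
          rfl
        | add u v hu hv =>
          simp only [mul_add, map_add] at hu hv ⊢
          rw [hu, hv]
          exact (map_add _ _ _).symm
      | add u v hu hv =>
        simp only [add_mul, map_add, LinearMap.add_apply] at hu hv ⊢
        rw [hu, hv]
        exact (LinearMap.map_add₂ (mulT R A (n + 1)) _ _ _).symm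
    exact key _ _

lemma mul_mem_T0 : ∀ x ∈ T0 R A h, ∀ y ∈ T0 R A h, x * y ∈ T0 R A h := by
  intro x hx
  induction hx using Submodule.span_induction with
  | mem x hxs =>
    intro y hy
    rcases hxs with ⟨u, rfl⟩ | rfl
    · rw [smul_mul_assoc]
      exact Submodule.subset_span (Or.inl ⟨u * y, rfl⟩)
    · rw [one_mul]; exact hy
  | zero => intro y hy; rw [zero_mul]; exact Submodule.zero_mem _
  | add x₁ x₂ _ _ h1 h2 => intro y hy; rw [add_mul]; exact Submodule.add_mem _ (h1 y hy) (h2 y hy)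
  | smul c x _ h1 => intro y hy; rw [smul_mul_assoc]; exact Submodule.smul_mem _ _ (h1 y hy)

lemma mulT_mem : ∀ n, ∀ x ∈ Tsub R A h n, ∀ y ∈ Tsub R A h n,
    mulT R A n x y ∈ Tsub R A h n := by
  intro n
  induction n with
  | zero => exact fun x hx y hy => mul_mem_T0 R A h x hx y hy
  | succ n ih =>
    intro x hx
    induction hx using Submodule.span_induction with
    | mem x hxs =>
      obtain ⟨a, ha, t, ht, rfl⟩ := hxs
      intro y hy
      induction hy using Submodule.span_induction with
      | mem y hys =>
        obtain ⟨b, hb, s, hs, rfl⟩ := hys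
        have e : mulT R A (n + 1) (a ⊗ₜ[R] t) (b ⊗ₜ[R] s) =
            (a * b) ⊗ₜ[R] (mulT R A n t s) := rfl
        rw [e]
        exact Submodule.subset_span
          ⟨a * b, mul_mem_T0 R A h a ha b hb, mulT R A n t s, ih t ht s hs, rfl⟩
      | zero => rw [map_zero]; exact Submodule.zero_mem _
      | add u v _ _ hu hv => rw [map_add]; exact Submodule.add_mem _ hu hv
      | smul c u _ hu => rw [map_smul]; exact Submodule.smul_mem _ _ hu
    | zero =>
      intro y hy
      rw [map_zero, LinearMap.zero_apply]; exact Submodule.zero_mem _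
    | add x1 x2 _ _ h1 h2 =>
      intro y hy
      rw [map_add, LinearMap.add_apply]; exact Submodule.add_mem _ (h1 y hy) (h2 y hy)
    | smul c x1 _ h1 =>
      intro y hy
      rw [map_smul, LinearMap.smul_apply]; exact Submodule.smul_mem _ _ (h1 y hy)

lemma projCounit_T0 : ∀ x ∈ T0 R A h, ∃ u : A, projCounit R A x = h • u := by
  intro x hx
  induction hx using Submodule.span_induction with
  | mem x hxs =>
    rcases hxs with ⟨u, rfl⟩ | rfl
    · exact ⟨projCounit R A u, by rw [map_smul]⟩
    · refine ⟨0, ?_⟩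
      rw [smul_zero]
      simp [projCounit]
  | zero => exact ⟨0, by rw [map_zero, smul_zero]⟩
  | add x₁ x₂ _ _ h1 h2 =>
    obtain ⟨u1, hu1⟩ := h1; obtain ⟨u2, hu2⟩ := h2
    exact ⟨u1 + u2, by rw [map_add, hu1, hu2, smul_add]⟩
  | smul c x1 _ h1 =>
    obtain ⟨u, hu⟩ := h1
    exact ⟨c • u, by rw [map_smul, hu, smul_comm]⟩

lemma projPow_Tsub : ∀ n, ∀ x ∈ Tsub R A h n,
    ∃ y : TpowM R A n, projPow R A n x = h ^ (n + 1) • y := by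
  intro n
  induction n with
  | zero =>
    intro x hx
    obtain ⟨u, hu⟩ := projCounit_T0 R A h x hx
    refine ⟨u, ?_⟩
    have e0 : projPow R A 0 x = projCounit R A x := rfl
    rw [e0, hu]
    simp only [zero_add, pow_one]
    exact rfl
  | succ n ih =>
    intro x hx
    induction hx using Submodule.span_induction with
    | mem x hxs =>
      obtain ⟨a, ha, t, ht, rfl⟩ := hxs
      obtain ⟨u, hu⟩ := projCounit_T0 R A h a ha
      obtain ⟨y, hy⟩ := ih t ht
      refine ⟨u ⊗ₜ[R] y, ?_⟩
      have e : projPow R A (n + 1) (a ⊗ₜ[R] t) =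
          (projCounit R A a) ⊗ₜ[R] (projPow R A n t) := rfl
      have sm : (h • u) ⊗ₜ[R] (h ^ (n + 1) • y) = h ^ (n + 1 + 1) • (u ⊗ₜ[R] y) :=
        calc (h • u) ⊗ₜ[R] (h ^ (n + 1) • y)
            = h • (u ⊗ₜ[R] (h ^ (n + 1) • y)) := (smul_tmul' h u _).symm
          _ = h • (h ^ (n + 1) • (u ⊗ₜ[R] y)) := by rw [tmul_smul]
          _ = h ^ (n + 1 + 1) • (u ⊗ₜ[R] y) := by rw [smul_smul, ← pow_succ']
      rw [e, hu, hy, sm]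
      exact rfl
    | zero => exact ⟨0, by rw [map_zero, smul_zero]⟩
    | add x₁ x₂ _ _ h1 h2 =>
      obtain ⟨y1, hy1⟩ := h1; obtain ⟨y2, hy2⟩ := h2
      exact ⟨y1 + y2, by rw [map_add, hy1, hy2, smul_add]⟩
    | smul c x1 _ h1 =>
      obtain ⟨y, hy⟩ := h1
      exact ⟨c • y, by rw [map_smul, hy, smul_comm]⟩

lemma projPow_iterComul_one : ∀ n, projPow R A n (iterComul R A n (1 : A)) = 0 := by
  intro n
  cases n with
  | zero =>
    show projCounit R A 1 = 0
    simp [projCounit]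
  | succ n =>
    rw [iterComul_succ_apply]
    rw [Bialgebra.comul_one, Algebra.TensorProduct.one_def]
    have e1 : (TensorProduct.map LinearMap.id (iterComul R A n)) ((1 : A) ⊗ₜ[R] (1 : A)) =
        (1 : A) ⊗ₜ[R] (iterComul R A n 1) := rfl
    rw [e1]
    have e2 : projPow R A (n + 1) ((1 : A) ⊗ₜ[R] (iterComul R A n 1)) =
        (projCounit R A 1) ⊗ₜ[R] (projPow R A n (iterComul R A n 1)) := rfl
    rw [e2]
    have e3 : projCounit R A (1 : A) = 0 := by simp [projCounit]
    rw [e3, TensorProduct.zero_tmul]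
    exact rfl

/-- The Drinfeld–Gavarini dual of a Hopf algebra `A` over `ℂ[ħ]` (`ħ = X`):
`A' = { a ∈ A : δ_n(a) ∈ ħ^n A^{⊗n} for all n ≥ 1 }` (here `deltaMap _ A (n-1) = δ_n`). -/
noncomputable def gavariniDual (A : Type*) [Ring A] [HopfAlgebra (Polynomial ℂ) A] :
    Set A :=
  {a : A | ∀ n : ℕ, ∃ y : TpowM (Polynomial ℂ) A n,
    deltaMap (Polynomial ℂ) A n a = (Polynomial.X : Polynomial ℂ) ^ (n + 1) • y}

/-- The Drinfeld–Gavarini dual `A'` of a Hopf algebra `A` over `ℂ[ħ]` is a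
`ℂ[ħ]`-subalgebra of `A` containing `1`. -/
theorem stmt15 (A : Type*) [Ring A] [HopfAlgebra (Polynomial ℂ) A] :
    (1 : A) ∈ gavariniDual A ∧
    (∀ a ∈ gavariniDual A, ∀ b ∈ gavariniDual A, a * b ∈ gavariniDual A) ∧
    (∀ a ∈ gavariniDual A, ∀ b ∈ gavariniDual A, a + b ∈ gavariniDual A) ∧
    (∀ c : Polynomial ℂ, ∀ a ∈ gavariniDual A, c • a ∈ gavariniDual A) := by
  refine ⟨?_, ?_, ?_, ?_⟩
  · intro n
    refine ⟨0, ?_⟩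
    rw [smul_zero]
    show projPow (Polynomial ℂ) A n (iterComul (Polynomial ℂ) A n 1) = 0
    exact projPow_iterComul_one (Polynomial ℂ) A n
  · intro a ha b hb n
    have ha' : ∀ m : ℕ, ∃ y : TpowM (Polynomial ℂ) A m,
        projPow (Polynomial ℂ) A m (iterComul (Polynomial ℂ) A m a) =
          (Polynomial.X : Polynomial ℂ) ^ (m + 1) • y := ha
    have hb' : ∀ m : ℕ, ∃ y : TpowM (Polynomial ℂ) A m,
        projPow (Polynomial ℂ) A m (iterComul (Polynomial ℂ) A m b) =
          (Polynomial.X : Polynomial ℂ) ^ (m + 1) • y := hb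
    have ta : iterComul (Polynomial ℂ) A n a ∈ Tsub (Polynomial ℂ) A Polynomial.X n := by
      have := theta_mem (Polynomial ℂ) A Polynomial.X a ha' (n + 1) n 0 (by omega)
      rw [Psub_zero] at this
      exact this
    have tb : iterComul (Polynomial ℂ) A n b ∈ Tsub (Polynomial ℂ) A Polynomial.X n := by
      have := theta_mem (Polynomial ℂ) A Polynomial.X b hb' (n + 1) n 0 (by omega)
      rw [Psub_zero] at this
      exact this
    have hmul := iterComul_mul (Polynomial ℂ) A n a b
    have hm := mulT_mem (Polynomial ℂ) A Polynomial.X n _ ta _ tb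
    obtain ⟨y, hy⟩ := projPow_Tsub (Polynomial ℂ) A Polynomial.X n _ hm
    refine ⟨y, ?_⟩
    show projPow (Polynomial ℂ) A n (iterComul (Polynomial ℂ) A n (a * b)) = _
    rw [hmul, hy]
  · intro a ha b hb n
    obtain ⟨y1, h1⟩ := ha n
    obtain ⟨y2, h2⟩ := hb n
    exact ⟨y1 + y2, by rw [map_add, h1, h2, smul_add]⟩
  · intro c a ha n
    obtain ⟨y, hy⟩ := ha n
    exact ⟨c • y, by rw [map_smul, hy, smul_comm]⟩
end
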